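/- For every ε ≥ 0, the ε-divergence Δ^ε is 2-generated: for every type X and all μ₁, μ₂ ∈ PMF(X), Δ^ε_X(μ₁‖μ₂) equals the supremum over all probabilistic maps γ : X → PMF({Acc, Rej}) of Δ^ε_{{Acc,Rej}}(γ(μ₁)‖γ(μ₂)). -/

import Mathlib

open scoped ENNReal

/-- The `ε`-divergence `Δ^ε_X(μ₁‖μ₂) = sup_{S ⊆ X} (Pr[μ₁ ∈ S] − e^ε·Pr[μ₂ ∈ S])`. -/
noncomputable def epsDiv (ε : ℝ) (X : Type) (μ₁ μ₂ : PMF X) : ℝ≥0∞ :=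
  ⨆ S : Set X,
    (μ₁.toOuterMeasure S - ENNReal.ofReal (Real.exp ε) * μ₂.toOuterMeasure S)

/-- A two-element set of decisions. -/
inductive Decision : Type
  | Acc : Decision
  | Rej : Decision

lemma ennreal_tsum_sub {ι : Type*} {a b : ι → ℝ≥0∞} (h1 : ∑' i, b i ≠ ∞)
    (h2 : ∀ i, b i ≤ a i) : ∑' i, (a i - b i) = ∑' i, a i - ∑' i, b i := by
  refine (ENNReal.eq_sub_of_add_eq h1 ?_).symm.symm
  rw [← ENNReal.tsum_add]
  exact tsum_congr fun i => tsub_add_cancel_of_le (h2 i)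

lemma pmf_outer_le_one {Y : Type} (p : PMF Y) (T : Set Y) : p.toOuterMeasure T ≤ 1 := by
  rw [PMF.toOuterMeasure_apply]
  calc ∑' y, T.indicator p y ≤ ∑' y, p y :=
        ENNReal.tsum_le_tsum fun y => Set.indicator_le_self _ _ _
    _ = 1 := p.tsum_coe

/-- The `ε`-divergence is `2`-generated: it equals its `2`-cut. -/
theorem epsDiv_two_generated (ε : ℝ) (hε : 0 ≤ ε) (X : Type) (μ₁ μ₂ : PMF X) :
    epsDiv ε X μ₁ μ₂ =
      ⨆ γ : X → PMF Decision, epsDiv ε Decision (μ₁.bind γ) (μ₂.bind γ) := by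
  classical
  set f := ENNReal.ofReal (Real.exp ε) with hf
  have hfne : f ≠ ∞ := ENNReal.ofReal_ne_top
  apply le_antisymm
  · refine iSup_le fun S => ?_
    set γ : X → PMF Decision := fun x =>
      if x ∈ S then PMF.pure Decision.Acc else PMF.pure Decision.Rej with hγ
    have key : ∀ μ : PMF X,
        (μ.bind γ).toOuterMeasure {Decision.Acc} = μ.toOuterMeasure S := by
      intro μ
      rw [PMF.toOuterMeasure_bind_apply, PMF.toOuterMeasure_apply]
      refine tsum_congr fun x => ?_
      by_cases hx : x ∈ S <;>
        simp [hγ, hx, Set.indicator, PMF.toOuterMeasure_apply_singleton]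
    refine le_trans ?_ (le_iSup _ γ)
    refine le_trans ?_ (le_iSup _ ({Decision.Acc} : Set Decision))
    rw [key, key]
  · refine iSup_le fun γ => iSup_le fun T => ?_
    set S : Set X := {x | f * μ₂ x < μ₁ x} with hS
    refine le_trans ?_ (le_iSup _ S)
    set g : X → ℝ≥0∞ := fun x => (γ x).toOuterMeasure T with hg
    have hg1 : ∀ x, g x ≤ 1 := fun x => pmf_outer_le_one _ _
    have hle : ∀ x, S.indicator (fun x => f * μ₂ x) x ≤ S.indicator μ₁ x := by
      intro x
      by_cases hx : x ∈ S
      · simpa [Set.indicator, hx] using (show f * μ₂ x < μ₁ x from hx).le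
      · simp [Set.indicator, hx]
    have hfin : ∑' x, S.indicator (fun x => f * μ₂ x) x ≠ ∞ := by
      refine ne_top_of_le_ne_top (by simp [hfne] : f * 1 ≠ ∞) ?_
      calc ∑' x, S.indicator (fun x => f * μ₂ x) x
          ≤ ∑' x, f * μ₂ x := ENNReal.tsum_le_tsum fun x => Set.indicator_le_self _ _ _
        _ = f * ∑' x, μ₂ x := ENNReal.tsum_mul_left
        _ = f * 1 := by rw [μ₂.tsum_coe]
    have hsub : μ₁.toOuterMeasure S - f * μ₂.toOuterMeasure S
        = ∑' x, S.indicator (fun x => μ₁ x - f * μ₂ x) x := by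
      rw [PMF.toOuterMeasure_apply, PMF.toOuterMeasure_apply, ← ENNReal.tsum_mul_left,
        show (∑' i, f * S.indicator (⇑μ₂) i) = ∑' i, S.indicator (fun x => f * μ₂ x) i from
          tsum_congr fun i => by by_cases hx : i ∈ S <;> simp [Set.indicator, hx],
        ← ennreal_tsum_sub hfin hle]
      refine tsum_congr fun x => ?_
      by_cases hx : x ∈ S <;> simp [Set.indicator, hx]
    rw [tsub_le_iff_right, hsub, PMF.toOuterMeasure_bind_apply,
      PMF.toOuterMeasure_bind_apply, ← ENNReal.tsum_mul_left, ← ENNReal.tsum_add]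
    refine ENNReal.tsum_le_tsum fun x => ?_
    by_cases hx : x ∈ S
    · have h1 : f * μ₂ x ≤ μ₁ x := (show f * μ₂ x < μ₁ x from hx).le
      calc μ₁ x * g x = ((μ₁ x - f * μ₂ x) + f * μ₂ x) * g x := by
            rw [tsub_add_cancel_of_le h1]
        _ = (μ₁ x - f * μ₂ x) * g x + f * μ₂ x * g x := by ring
        _ ≤ (μ₁ x - f * μ₂ x) * 1 + f * (μ₂ x * g x) := by
            rw [mul_assoc]
            exact add_le_add_left (mul_le_mul_right (hg1 x) _) _
        _ = S.indicator (fun x => μ₁ x - f * μ₂ x) x + f * (μ₂ x * g x) := by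
            simp [Set.indicator, hx]
    · have h1 : μ₁ x ≤ f * μ₂ x := not_lt.mp (by simpa [hS] using hx)
      calc μ₁ x * g x ≤ f * μ₂ x * g x := mul_le_mul_left h1 _
        _ = f * (μ₂ x * g x) := mul_assoc _ _ _
        _ ≤ S.indicator (fun x => μ₁ x - f * μ₂ x) x + f * (μ₂ x * g x) :=
            le_add_self
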